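/- Let a : [0,∞) → R and w : [0,∞) → R^d be differentiable and satisfy the balanced gradient-flow relations ȧ(t) = g(t)^⊤ w(t) and ẇ(t) = a(t)·g(t) for some function g : [0,∞) → R^d. If |a(0)| = ‖w(0)‖, then |a(t)| = ‖w(t)‖ for all t ≥ 0, and a(t)² - ‖w(t)‖² = a(0)² - ‖w(0)‖² in general; moreover if a(0) ≠ 0, then sgn(a(t)) = sgn(a(0)) for all t ≥ 0. -/

import Mathlib

open scoped RealInnerProductSpace

open Set Real

theorem balanced_dynamics {d : ℕ}
    (a : ℝ → ℝ) (w : ℝ → EuclideanSpace ℝ (Fin d)) (g : ℝ → EuclideanSpace ℝ (Fin d))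
    (hg : Continuous g)
    (hda : ∀ t, 0 ≤ t → HasDerivAt a ⟪g t, w t⟫ t)
    (hdw : ∀ t, 0 ≤ t → HasDerivAt w (a t • g t) t) :
    (∀ t, 0 ≤ t → a t ^ 2 - ‖w t‖ ^ 2 = a 0 ^ 2 - ‖w 0‖ ^ 2) ∧
    (|a 0| = ‖w 0‖ → ∀ t, 0 ≤ t → |a t| = ‖w t‖) ∧
    (|a 0| = ‖w 0‖ → a 0 ≠ 0 → ∀ t, 0 ≤ t → Real.sign (a t) = Real.sign (a 0)) := by
  -- derivative of inner ⟪w, w⟫ = ‖w‖²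
  have hwsq : ∀ t, 0 ≤ t →
      HasDerivAt (fun s => ‖w s‖ ^ 2) (2 * a t * ⟪g t, w t⟫) t := by
    intro t ht
    have h1 : HasDerivAt (fun s => ⟪w s, w s⟫)
        (⟪w t, a t • g t⟫ + ⟪a t • g t, w t⟫) t :=
      (hdw t ht).inner ℝ (hdw t ht)
    have h2 : ⟪w t, a t • g t⟫ + ⟪a t • g t, w t⟫ = 2 * a t * ⟪g t, w t⟫ := by
      rw [real_inner_smul_left, real_inner_smul_right, real_inner_comm (w t) (g t)]
      ring
    have h3 : (fun s => ⟪w s, w s⟫) = fun s => ‖w s‖ ^ 2 := by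
      funext s; exact real_inner_self_eq_norm_sq (w s)
    rw [h2, h3] at h1; exact h1
  have hE : ∀ t, 0 ≤ t → HasDerivAt (fun s => a s ^ 2 - ‖w s‖ ^ 2) 0 t := by
    intro t ht
    have h1 : HasDerivAt (fun s => a s ^ 2) (2 * a t * ⟪g t, w t⟫) t := by
      have : HasDerivAt (fun s => a s ^ 2) _ t := (hda t ht).pow 2
      simpa [mul_comm, mul_assoc, mul_left_comm] using this
    have := h1.sub (hwsq t ht); rw [sub_self] at this; exact this
  have part1 : ∀ t, 0 ≤ t → a t ^ 2 - ‖w t‖ ^ 2 = a 0 ^ 2 - ‖w 0‖ ^ 2 := by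
    intro t ht
    have hcont : ContinuousOn (fun s => a s ^ 2 - ‖w s‖ ^ 2) (Icc 0 t) := by
      intro x hx
      exact ((hE x hx.1).continuousAt).continuousWithinAt
    exact constant_of_has_deriv_right_zero hcont
      (fun x hx => (hE x hx.1).hasDerivWithinAt) t ⟨ht, le_rfl⟩
  have part2 : |a 0| = ‖w 0‖ → ∀ t, 0 ≤ t → |a t| = ‖w t‖ := by
    intro h0 t ht
    have h1 := part1 t ht
    have h2 : a 0 ^ 2 = ‖w 0‖ ^ 2 := by rw [← sq_abs, h0]
    have h3 : a t ^ 2 = ‖w t‖ ^ 2 := by linarith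
    calc |a t| = Real.sqrt (a t ^ 2) := (Real.sqrt_sq_eq_abs _).symm
      _ = Real.sqrt (‖w t‖ ^ 2) := by rw [h3]
      _ = ‖w t‖ := Real.sqrt_sq (norm_nonneg _)
  refine ⟨part1, part2, ?_⟩
  intro h0 ha0 t ht
  -- first: a never vanishes on [0, ∞)
  have hne : ∀ t₀, 0 ≤ t₀ → a t₀ ≠ 0 := by
    intro t₀ ht₀ haz
    have hwz : w t₀ = 0 := by
      have := part2 h0 t₀ ht₀
      rw [haz, abs_zero] at this
      exact norm_eq_zero.mp this.symm
    -- reverse time, Grönwall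
    obtain ⟨C, hC⟩ : ∃ C, ∀ x ∈ Icc (0:ℝ) t₀, ‖g x‖ ≤ C :=
      (isCompact_Icc.exists_bound_of_continuousOn hg.continuousOn)
    set f : ℝ → ℝ := fun s => a (t₀ - s) ^ 2 + ‖w (t₀ - s)‖ ^ 2 with hf
    have hτ : ∀ s ∈ Ico (0:ℝ) t₀, (0:ℝ) ≤ t₀ - s ∧ t₀ - s ∈ Icc (0:ℝ) t₀ := by
      intro s hs
      constructor
      · linarith [hs.2]
      · constructor <;> [linarith [hs.2]; linarith [hs.1]]
    have hf' : ∀ s ∈ Ico (0:ℝ) t₀,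
        HasDerivAt f (-(4 * a (t₀ - s) * ⟪g (t₀ - s), w (t₀ - s)⟫)) s := by
      intro s hs
      obtain ⟨hsτ, _⟩ := hτ s hs
      have hid : HasDerivAt (fun s : ℝ => t₀ - s) (-1) s := by
        simpa using (hasDerivAt_id s).const_sub t₀
      have h1 : HasDerivAt (fun s => a (t₀ - s)) (⟪g (t₀ - s), w (t₀ - s)⟫ * (-1)) s :=
        (hda _ hsτ).comp s hid
      have h2 : HasDerivAt (fun s => w (t₀ - s)) ((-1 : ℝ) • (a (t₀ - s) • g (t₀ - s))) s :=
        (hdw _ hsτ).scomp s hid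
      have h3 : HasDerivAt (fun s => ⟪w (t₀ - s), w (t₀ - s)⟫)
          (⟪w (t₀ - s), (-1 : ℝ) • (a (t₀ - s) • g (t₀ - s))⟫ +
           ⟪(-1 : ℝ) • (a (t₀ - s) • g (t₀ - s)), w (t₀ - s)⟫) s := h2.inner ℝ h2
      have h3' : HasDerivAt (fun s => ‖w (t₀ - s)‖ ^ 2)
          (-(2 * a (t₀ - s) * ⟪g (t₀ - s), w (t₀ - s)⟫)) s := by
        have heq : (fun s => ⟪w (t₀ - s), w (t₀ - s)⟫) = fun s => ‖w (t₀ - s)‖ ^ 2 := by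
          funext u; exact real_inner_self_eq_norm_sq _
        rw [heq] at h3
        convert h3 using 1
        rw [real_inner_smul_left, real_inner_smul_right, real_inner_smul_left,
          real_inner_smul_right, real_inner_comm (w (t₀ - s)) (g (t₀ - s))]
        ring
      have h4 : HasDerivAt (fun s => a (t₀ - s) ^ 2)
          (-(2 * a (t₀ - s) * ⟪g (t₀ - s), w (t₀ - s)⟫)) s := by
        have : HasDerivAt (fun s => a (t₀ - s) ^ 2) _ s := h1.pow 2
        convert this using 1; ring
      have : HasDerivAt (fun s => a (t₀ - s) ^ 2 + ‖w (t₀ - s)‖ ^ 2) _ s := h4.add h3'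
      convert this using 1; ring
    have hcont : ContinuousOn f (Icc 0 t₀) := by
      intro x hx
      rcases eq_or_lt_of_le hx.2 with h | h
      ·
        -- a and w are differentiable at any point ≥ 0, and t₀ - x ≥ 0 always on Icc
        have hx0 : (0:ℝ) ≤ t₀ - x := by linarith [hx.2]
        have hca : ContinuousAt (fun s => a (t₀ - s)) x :=
          ((hda _ hx0).continuousAt).comp (by fun_prop)
        have hcw : ContinuousAt (fun s => w (t₀ - s)) x :=
          ((hdw _ hx0).continuousAt).comp (by fun_prop)
        exact ((hca.pow 2).add ((hcw.norm).pow 2)).continuousWithinAt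
      · have hx0 : (0:ℝ) ≤ t₀ - x := by linarith
        have hca : ContinuousAt (fun s => a (t₀ - s)) x :=
          ((hda _ hx0).continuousAt).comp (by fun_prop)
        have hcw : ContinuousAt (fun s => w (t₀ - s)) x :=
          ((hdw _ hx0).continuousAt).comp (by fun_prop)
        exact ((hca.pow 2).add ((hcw.norm).pow 2)).continuousWithinAt
    have hC0 : 0 ≤ C := le_trans (norm_nonneg _) (hC t₀ ⟨ht₀, le_rfl⟩)
    have key := norm_le_gronwallBound_of_norm_deriv_right_le (f := f)
      (f' := fun s => -(4 * a (t₀ - s) * ⟪g (t₀ - s), w (t₀ - s)⟫))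
      (δ := 0) (K := 2 * C) (ε := 0) (a := 0) (b := t₀)
      hcont (fun x hx => (hf' x hx).hasDerivWithinAt)
      (by simp [hf, haz, hwz]) ?_ t₀ ⟨ht₀, le_rfl⟩
    · rw [gronwallBound_ε0_δ0] at key
      have hfz : f t₀ = 0 := by simpa using key
      simp only [hf, sub_self] at hfz
      have : a 0 = 0 := by nlinarith [sq_nonneg (a 0), norm_nonneg (w 0), sq_nonneg ‖w 0‖]
      exact ha0 this
    · intro x hx
      obtain ⟨hxτ, hxm⟩ := hτ x hx
      have hCS : |⟪g (t₀ - x), w (t₀ - x)⟫| ≤ ‖g (t₀ - x)‖ * ‖w (t₀ - x)‖ :=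
        abs_real_inner_le_norm _ _
      have hgb : ‖g (t₀ - x)‖ ≤ C := hC _ hxm
      have hfv : ‖f x‖ = a (t₀ - x) ^ 2 + ‖w (t₀ - x)‖ ^ 2 := by
        rw [Real.norm_eq_abs, abs_of_nonneg (by positivity)]
      rw [hfv, Real.norm_eq_abs, abs_neg, add_zero]
      have h1 : |4 * a (t₀ - x) * ⟪g (t₀ - x), w (t₀ - x)⟫| ≤
          4 * |a (t₀ - x)| * (‖g (t₀ - x)‖ * ‖w (t₀ - x)‖) := by
        rw [abs_mul, abs_mul, abs_of_nonneg (by norm_num : (0:ℝ) ≤ 4)]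
        gcongr
      have h2 : 4 * |a (t₀ - x)| * (‖g (t₀ - x)‖ * ‖w (t₀ - x)‖) ≤
          2 * C * (a (t₀ - x) ^ 2 + ‖w (t₀ - x)‖ ^ 2) := by
        nlinarith [sq_nonneg (|a (t₀ - x)| - ‖w (t₀ - x)‖), abs_nonneg (a (t₀ - x)),
          norm_nonneg (w (t₀ - x)), norm_nonneg (g (t₀ - x)), sq_abs (a (t₀ - x)),
          mul_le_mul_of_nonneg_right hgb (mul_nonneg (abs_nonneg (a (t₀ - x))) (norm_nonneg (w (t₀ - x))))]
      linarith
  -- sign preservation by IVT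
  have hca : ContinuousOn a (Icc 0 t) := fun x hx => ((hda x hx.1).continuousAt).continuousWithinAt
  have hat : a t ≠ 0 := hne t ht
  rcases lt_or_gt_of_ne ha0 with h0neg | h0pos
  · have hatneg : a t < 0 := by
      by_contra h
      push_neg at h
      have hpos : 0 < a t := lt_of_le_of_ne h (Ne.symm hat)
      have : (0:ℝ) ∈ Icc (a 0) (a t) := ⟨le_of_lt h0neg, le_of_lt hpos⟩
      obtain ⟨s, hs, hsz⟩ := intermediate_value_Icc ht hca this
      exact hne s hs.1 hsz
    rw [Real.sign_of_neg hatneg, Real.sign_of_neg h0neg]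
  · have hatpos : 0 < a t := by
      by_contra h
      push_neg at h
      have hneg : a t < 0 := lt_of_le_of_ne h hat
      have : (0:ℝ) ∈ Icc (a t) (a 0) := ⟨le_of_lt hneg, le_of_lt h0pos⟩
      obtain ⟨s, hs, hsz⟩ := intermediate_value_Icc' ht hca this
      exact hne s hs.1 hsz
    rw [Real.sign_of_pos hatpos, Real.sign_of_pos h0pos]
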